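/- Let p be a positive integer and let a ∈ ℂ((t)) be a nonzero formal Laurent series such that every exponent occurring in the support of a^p is divisible by p (i.e., a^p lies in the image of ℂ((x)) under x ↦ t^p). Then there exists an integer r such that every exponent occurring in the support of a is congruent to r modulo p (i.e., a ∈ t^r·ℂ((t^p))). -/

import Mathlib

open HahnSeries Finset

/-- The twist of a Laurent series by `ζ`: coefficient `i` is multiplied by `ζ ^ i`. -/
noncomputable def lsTwist (ζ : ℂ) (hζ : ζ ≠ 0) (a : LaurentSeries ℂ) : LaurentSeries ℂ :=
  ⟨fun i => ζ ^ i * a.coeff i, by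
    have h : Function.support (fun i : ℤ => ζ ^ i * a.coeff i) = a.support := by
      ext i
      simp [Function.mem_support, mul_ne_zero_iff, zpow_ne_zero, hζ, HahnSeries.support]
    rw [h]; exact a.isPWO_support⟩

lemma lsTwist_coeff (ζ : ℂ) (hζ : ζ ≠ 0) (a : LaurentSeries ℂ) (i : ℤ) :
    (lsTwist ζ hζ a).coeff i = ζ ^ i * a.coeff i := rfl

lemma lsTwist_support (ζ : ℂ) (hζ : ζ ≠ 0) (a : LaurentSeries ℂ) :
    (lsTwist ζ hζ a).support = a.support := by
  ext i
  simp [HahnSeries.mem_support, lsTwist_coeff, mul_ne_zero_iff, zpow_ne_zero, hζ]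

lemma lsTwist_mul (ζ : ℂ) (hζ : ζ ≠ 0) (a b : LaurentSeries ℂ) :
    lsTwist ζ hζ (a * b) = lsTwist ζ hζ a * lsTwist ζ hζ b := by
  ext n
  have hfin : Finset.antidiagonal (lsTwist ζ hζ a).isPWO_support
      (lsTwist ζ hζ b).isPWO_support n = Finset.antidiagonal a.isPWO_support b.isPWO_support n := by
    ext ij
    simp only [Finset.mem_antidiagonal, lsTwist_support]
  rw [lsTwist_coeff, HahnSeries.coeff_mul, HahnSeries.coeff_mul, hfin, Finset.mul_sum]
  refine Finset.sum_congr rfl fun ij hij => ?_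
  rw [Finset.mem_antidiagonal] at hij
  rw [lsTwist_coeff, lsTwist_coeff, ← hij.2.2, zpow_add₀ hζ]
  ring

lemma lsTwist_one (ζ : ℂ) (hζ : ζ ≠ 0) : lsTwist ζ hζ 1 = 1 := by
  ext i
  rw [lsTwist_coeff]
  by_cases hi : i = 0
  · subst hi; simp [HahnSeries.coeff_one]
  · simp [HahnSeries.coeff_one, hi]

lemma lsTwist_pow (ζ : ℂ) (hζ : ζ ≠ 0) (a : LaurentSeries ℂ) (n : ℕ) :
    lsTwist ζ hζ (a ^ n) = (lsTwist ζ hζ a) ^ n := by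
  induction n with
  | zero => simpa using lsTwist_one ζ hζ
  | succ n ih => rw [pow_succ, pow_succ, lsTwist_mul, ih]

/-- if `a` is a nonzero formal Laurent series such that all
exponents in the support of `a^p` are divisible by `p`, then all exponents in
the support of `a` are congruent to a single residue `r` modulo `p`. -/
theorem stmt_15 (p : ℕ) (hp : 0 < p) (a : LaurentSeries ℂ) (ha : a ≠ 0)
    (hap : ∀ i : ℤ, (a ^ p).coeff i ≠ 0 → (p : ℤ) ∣ i) :
    ∃ r : ℤ, ∀ i : ℤ, a.coeff i ≠ 0 → (p : ℤ) ∣ (i - r) := by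
  haveI : NeZero p := ⟨hp.ne'⟩
  have hprim : IsPrimitiveRoot (Complex.exp (2 * Real.pi * Complex.I / p)) p :=
    Complex.isPrimitiveRoot_exp p hp.ne'
  set ζ : ℂ := Complex.exp (2 * Real.pi * Complex.I / p) with hζdef
  have hζ0 : ζ ≠ 0 := hprim.ne_zero hp.ne'
  -- the twist fixes a ^ p
  have hfix : lsTwist ζ hζ0 (a ^ p) = a ^ p := by
    ext n
    rw [lsTwist_coeff]
    by_cases hc : (a ^ p).coeff n = 0
    · rw [hc, mul_zero]
    · obtain ⟨m, rfl⟩ := hap n hc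
      have : ζ ^ ((p : ℤ) * m) = 1 := by
        rw [zpow_mul, zpow_natCast, hprim.pow_eq_one, one_zpow]
      rw [this, one_mul]
  -- hence (twist a / a) ^ p = 1
  have hu : (lsTwist ζ hζ0 a * a⁻¹) ^ p = 1 := by
    rw [mul_pow, ← lsTwist_pow, hfix, inv_pow, mul_inv_cancel₀ (pow_ne_zero p ha)]
  have hCprim : IsPrimitiveRoot (HahnSeries.C ζ : LaurentSeries ℂ) p :=
    hprim.map_of_injective HahnSeries.C_injective
  obtain ⟨k, -, hk⟩ := hCprim.eq_pow_of_pow_eq_one hu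
  have h2 : lsTwist ζ hζ0 a = (HahnSeries.C ζ) ^ k * a := by
    rw [hk, inv_mul_cancel_right₀ ha]
  refine ⟨(k : ℤ), fun i hi => ?_⟩
  have h3 : ζ ^ i * a.coeff i = ζ ^ (k : ℤ) * a.coeff i := by
    have := congrArg (fun x : LaurentSeries ℂ => x.coeff i) h2
    simp only [lsTwist_coeff] at this
    rw [this, ← map_pow, HahnSeries.C_apply, HahnSeries.coeff_single_zero_mul,
      ← zpow_natCast]
  have h4 : ζ ^ i = ζ ^ (k : ℤ) := mul_right_cancel₀ hi h3
  have h5 : ζ ^ (i - (k : ℤ)) = 1 := by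
    rw [zpow_sub₀ hζ0, h4, div_self (zpow_ne_zero _ hζ0)]
  exact (hprim.zpow_eq_one_iff_dvd _).mp h5
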